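/- Let T be a rooted tree on vertex set [n] with edges oriented toward the root, and for a vertex v let T_v denote the subtree of all vertices u with a directed path from u to v (including v). A sequence s in [n]^n is a parking function on T (all n drivers park, where driver i starts at s_i and parks at the first unoccupied vertex on the directed path from s_i to the root) if and only if for every vertex v, |T_v| ≤ |{i : s_i ∈ T_v}|. -/

import Mathlib

/-! Rooted trees on vertex set `Fin n`, edges oriented towards the root: encoded by
the root and the parent function (`parent v` is the endpoint of the unique outgoing
edge of a non-root vertex `v`; the root is a fixed point). Tree-ness is the condition
that every vertex reaches the root by iterating `parent` (fewer than `n` steps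
always suffice). -/

/-- `(root, parent)` encodes a rooted tree on `Fin n` with edges oriented toward the
root. -/
def IsRootedTree {n : ℕ} (root : Fin n) (parent : Fin n → Fin n) : Prop :=
  parent root = root ∧ ∀ v, ∃ k ∈ Finset.range n, parent^[k] v = root

/-- `T_v`: the set of vertices `u` with a directed path from `u` to `v`
(including `v` itself). -/
def subtree {n : ℕ} (parent : Fin n → Fin n) (v : Fin n) : Finset (Fin n) :=
  Finset.univ.filter fun u => ∃ k ∈ Finset.range n, parent^[k] u = v

/-- The directed path from `v` towards the root: `v, parent v, parent² v, …`. -/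
def pathToRoot {n : ℕ} (parent : Fin n → Fin n) (v : Fin n) : List (Fin n) :=
  (List.range n).map fun k => parent^[k] v

/-- The spot where a driver preferring `v` parks, given the set `occ` of occupied
vertices: the first unoccupied vertex on the path from `v` to the root (`none` if
there is no such vertex, i.e. the driver leaves without parking). -/
def parkSpot {n : ℕ} (parent : Fin n → Fin n) (occ : Finset (Fin n)) (v : Fin n) :
    Option (Fin n) :=
  (pathToRoot parent v).find? fun u => decide (u ∉ occ)

/-- The effect of one driver (preferring `v`) parking on the occupied set. -/
def treeStep {n : ℕ} (parent : Fin n → Fin n) (occ : Finset (Fin n)) (v : Fin n) :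
    Finset (Fin n) :=
  match parkSpot parent occ v with
  | some u => insert u occ
  | none => occ

/-- The set of occupied vertices after the first `m` drivers (with preference
sequence `s`) have attempted to park, in order. -/
def occAfter {n : ℕ} (parent : Fin n → Fin n) (s : Fin n → Fin n) (m : ℕ) :
    Finset (Fin n) :=
  ((List.ofFn s).take m).foldl (treeStep parent) ∅

/-- `s` is a parking function on the rooted tree `(root, parent)`: all `n` drivers
successfully park. -/
def IsTreePF {n : ℕ} (parent : Fin n → Fin n) (s : Fin n → Fin n) : Prop :=
  occAfter parent s n = Finset.univ

/-- `s` is a prime parking function on `(root, parent)`: it is a parking function and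
for every non-root vertex `v`, `|T_v| < |{i : s_i ∈ T_v}|`. -/
def IsPrimeTreePF {n : ℕ} (root : Fin n) (parent : Fin n → Fin n)
    (s : Fin n → Fin n) : Prop :=
  IsTreePF parent s ∧ ∀ v, v ≠ root →
    (subtree parent v).card < (Finset.univ.filter fun i => s i ∈ subtree parent v).card

/-- The edge `(u, parent u)` (for non-root `u`) is *used* by `s`: some driver `i`,
after failing to park at her preferred spot `s i`, crosses it, i.e. every vertex on
the path from `s i` up to and including `u` is occupied when she drives. -/
def UsedEdge {n : ℕ} (root : Fin n) (parent : Fin n → Fin n) (s : Fin n → Fin n)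
    (u : Fin n) : Prop :=
  u ≠ root ∧ ∃ i : Fin n, ∃ k, parent^[k] (s i) = u ∧
    ∀ j ≤ k, parent^[j] (s i) ∈ occAfter parent s i

namespace TreePFAux

variable {n : ℕ} {root : Fin n} {parent : Fin n → Fin n}

lemma mem_subtree {v u : Fin n} :
    u ∈ subtree parent v ↔ ∃ k < n, parent^[k] u = v := by
  simp [subtree]

lemma reach_lt (hT : IsRootedTree root parent) {u v : Fin n} {m : ℕ}
    (h : parent^[m] u = v) : ∃ k < n, parent^[k] u = v := by
  obtain ⟨hroot, hreach⟩ := hT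
  obtain ⟨k0, hk0, hk0'⟩ := hreach u
  rw [Finset.mem_range] at hk0
  by_cases hm : m ≤ k0
  · exact ⟨m, by omega, h⟩
  · have hm' : parent^[m] u = root := by
      have hmk : m = (m - k0) + k0 := by omega
      rw [hmk, Function.iterate_add_apply, hk0', Function.iterate_fixed hroot]
    exact ⟨k0, hk0, by rw [hk0', ← hm', h]⟩

lemma subtree_trans (hT : IsRootedTree root parent) {a w v : Fin n}
    (h1 : a ∈ subtree parent w) (h2 : w ∈ subtree parent v) : a ∈ subtree parent v := by
  rw [mem_subtree] at h1 h2 ⊢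
  obtain ⟨k, -, hk⟩ := h1
  obtain ⟨l, -, hl⟩ := h2
  exact reach_lt hT (by rw [Function.iterate_add_apply, hk, hl] :
    parent^[l + k] a = v)

lemma parkSpot_eq (occ : Finset (Fin n)) (v : Fin n) :
    parkSpot parent occ v =
      ((List.range n).find? fun k => decide (parent^[k] v ∉ occ)).map
        fun k => parent^[k] v := by
  rw [parkSpot, pathToRoot, List.find?_map]
  rfl

lemma parkSpot_some {occ : Finset (Fin n)} {v w : Fin n}
    (h : parkSpot parent occ v = some w) :
    w ∉ occ ∧ ∃ k < n, parent^[k] v = w := by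
  rw [parkSpot_eq, Option.map_eq_some_iff] at h
  obtain ⟨j, hj, rfl⟩ := h
  rw [List.find?_range_eq_some] at hj
  obtain ⟨hp, hjn, -⟩ := hj
  simp only [decide_eq_true_eq] at hp
  exact ⟨hp, j, List.mem_range.mp hjn, rfl⟩

lemma parkSpot_first {occ : Finset (Fin n)} {v u : Fin n} (hu : u ∉ occ)
    {k : ℕ} (hk : k < n) (hku : parent^[k] v = u) :
    ∃ w, parkSpot parent occ v = some w ∧ w ∈ subtree parent u := by
  rw [parkSpot_eq]
  rcases hfind : (List.range n).find? (fun k => decide (parent^[k] v ∉ occ)) with _ | j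
  · exfalso
    rw [List.find?_range_eq_none] at hfind
    have := hfind k hk
    simp [hku, hu] at this
  · refine ⟨parent^[j] v, rfl, ?_⟩
    rw [List.find?_range_eq_some] at hfind
    obtain ⟨-, hjn, hmin⟩ := hfind
    have hjk : j ≤ k := by
      by_contra hjk
      have := hmin k (by omega)
      simp [hku, hu] at this
    rw [mem_subtree]
    refine ⟨k - j, by omega, ?_⟩
    rw [← Function.iterate_add_apply]
    rw [show k - j + j = k by omega, hku]

lemma occAfter_succ {s : Fin n → Fin n} {m : ℕ} (hm : m < n) :
    occAfter parent s (m + 1) = treeStep parent (occAfter parent s m) (s ⟨m, hm⟩) := by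
  unfold occAfter
  rw [List.take_succ, List.foldl_append]
  simp [List.getElem?_ofFn, hm]

lemma occAfter_stab {s : Fin n → Fin n} {m : ℕ} (hm : n ≤ m) :
    occAfter parent s m = occAfter parent s n := by
  unfold occAfter
  rw [List.take_of_length_le (by simpa using hm), List.take_of_length_le (by simp)]

lemma subset_treeStep (occ : Finset (Fin n)) (v : Fin n) :
    occ ⊆ treeStep parent occ v := by
  unfold treeStep
  rcases parkSpot parent occ v with _ | u
  · exact subset_rfl
  · exact Finset.subset_insert _ _

lemma occAfter_mono {s : Fin n → Fin n} {m m' : ℕ} (h : m ≤ m') :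
    occAfter parent s m ⊆ occAfter parent s m' := by
  induction m' with
  | zero => simp_all
  | succ m' ih =>
    rcases Nat.eq_or_lt_of_le h with rfl | h'
    · exact subset_rfl
    · refine (ih (by omega)).trans ?_
      by_cases hm' : m' < n
      · rw [occAfter_succ hm']
        exact subset_treeStep _ _
      · rw [occAfter_stab (show n ≤ m' + 1 by omega), occAfter_stab (show n ≤ m' by omega)]

lemma occ_parked {s : Fin n → Fin n} : ∀ m, ∀ w ∈ occAfter parent s m,
    ∃ i, ∃ hi : i < n, i < m ∧
      parkSpot parent (occAfter parent s i) (s ⟨i, hi⟩) = some w := by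
  intro m
  induction m with
  | zero => simp [occAfter]
  | succ m ih =>
    by_cases hm : m < n
    · rw [occAfter_succ hm]
      unfold treeStep
      rcases h : parkSpot parent (occAfter parent s m) (s ⟨m, hm⟩) with _ | u
      · intro w hw
        obtain ⟨i, hi, him, hsp⟩ := ih w hw
        exact ⟨i, hi, by omega, hsp⟩
      · intro w hw
        rcases Finset.mem_insert.mp hw with rfl | hw
        · exact ⟨m, hm, m.lt_succ_self, h⟩
        · obtain ⟨i, hi, him, hsp⟩ := ih w hw
          exact ⟨i, hi, by omega, hsp⟩
    · intro w hw
      rw [occAfter_stab (by omega)] at hw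
      have hw' : w ∈ occAfter parent s m := by
        rw [occAfter_stab (by omega)]; exact hw
      obtain ⟨i, hi, him, hsp⟩ := ih w hw'
      exact ⟨i, hi, by omega, hsp⟩

lemma parked_mem_succ {s : Fin n → Fin n} {i : ℕ} (hi : i < n) {w : Fin n}
    (h : parkSpot parent (occAfter parent s i) (s ⟨i, hi⟩) = some w) :
    w ∈ occAfter parent s (i + 1) := by
  rw [occAfter_succ hi]
  unfold treeStep
  rw [h]
  exact Finset.mem_insert_self _ _

end TreePFAux

open TreePFAux

/-- `s` is a parking function on the rooted tree `(root, parent)` if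
and only if for every vertex `v`, `|T_v| ≤ |{i : s_i ∈ T_v}|`. -/
theorem isTreePF_iff_count {n : ℕ} (root : Fin n) (parent : Fin n → Fin n)
    (hT : IsRootedTree root parent) (s : Fin n → Fin n) :
    IsTreePF parent s ↔ ∀ v : Fin n,
      (subtree parent v).card ≤ (Finset.univ.filter fun i => s i ∈ subtree parent v).card := by
  constructor
  · intro hpf v
    have hall : ∀ w, w ∈ subtree parent v →
        ∃ i : Fin n, parkSpot parent (occAfter parent s i) (s i) = some w := by
      intro w _
      have hw : w ∈ occAfter parent s n := by rw [hpf]; exact Finset.mem_univ w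
      obtain ⟨i, hi, -, hsp⟩ := occ_parked n w hw
      exact ⟨⟨i, hi⟩, hsp⟩
    choose! f hf using hall
    apply Finset.card_le_card_of_injOn f
    · intro w hw
      rw [Finset.mem_coe, Finset.mem_filter]
      refine ⟨Finset.mem_univ _, ?_⟩
      obtain ⟨-, k, hk, hkw⟩ := parkSpot_some (hf w hw)
      exact subtree_trans hT (mem_subtree.mpr ⟨k, hk, hkw⟩) hw
    · intro w hw w' hw' hww
      have h1 := hf w hw
      have h2 := hf w' hw'
      rw [hww] at h1
      exact Option.some_injective _ (h1.symm.trans h2)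
  · intro hcount
    by_contra hpf
    obtain ⟨u, hu⟩ : ∃ u, u ∉ occAfter parent s n := by
      by_contra h
      push_neg at h
      exact hpf (Finset.eq_univ_iff_forall.mpr h)
    have hu' : ∀ m ≤ n, u ∉ occAfter parent s m :=
      fun m hm hmem => hu (occAfter_mono hm hmem)
    have hspot : ∀ i : Fin n, s i ∈ subtree parent u →
        ∃ w, parkSpot parent (occAfter parent s (i : ℕ)) (s i) = some w ∧
          w ∈ subtree parent u := by
      intro i hsi
      rw [mem_subtree] at hsi
      obtain ⟨k, hk, hku⟩ := hsi
      exact parkSpot_first (hu' i i.2.le) hk hku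
    choose! g hg1 hg2 using hspot
    have key : ∀ i j : Fin n, s i ∈ subtree parent u → s j ∈ subtree parent u →
        (i : ℕ) < (j : ℕ) → g i ≠ g j := by
      intro i j hi hj hlt heq
      have h1 : g i ∈ occAfter parent s ((i : ℕ) + 1) :=
        parked_mem_succ i.2 (hg1 i hi)
      have h2 : g i ∈ occAfter parent s (j : ℕ) := occAfter_mono (by omega) h1
      obtain ⟨hnot, -⟩ := parkSpot_some (hg1 j hj)
      rw [heq] at h2
      exact hnot h2
    have hcard : (Finset.univ.filter fun i => s i ∈ subtree parent u).card ≤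
        (subtree parent u \ {u}).card := by
      apply Finset.card_le_card_of_injOn g
      · intro i hi
        rw [Finset.mem_coe, Finset.mem_filter] at hi
        rw [Finset.mem_coe, Finset.mem_sdiff, Finset.mem_singleton]
        refine ⟨hg2 i hi.2, fun hgu => ?_⟩
        apply hu' ((i : ℕ) + 1) i.2
        rw [← hgu]
        exact parked_mem_succ i.2 (hg1 i hi.2)
      · intro i hi j hj hij
        rw [Finset.mem_coe, Finset.mem_filter] at hi hj
        by_contra hne
        rcases lt_trichotomy (i : ℕ) (j : ℕ) with h | h | h
        · exact key i j hi.2 hj.2 h hij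
        · exact hne (Fin.ext h)
        · exact key j i hj.2 hi.2 h hij.symm
    have hu_mem : u ∈ subtree parent u := mem_subtree.mpr ⟨0, u.pos, rfl⟩
    have hsd : (subtree parent u \ {u}).card = (subtree parent u).card - 1 := by
      rw [Finset.card_sdiff_of_subset (Finset.singleton_subset_iff.mpr hu_mem), Finset.card_singleton]
    have hpos : 0 < (subtree parent u).card := Finset.card_pos.mpr ⟨u, hu_mem⟩
    have hc := hcount u
    omega
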